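/- Let X be a locally compact separable metric space, f : X → X a perfect mapping such that the set of f-invariant Borel probability measures on X is nonempty, and let f̃ : X̃ → X̃ be the extension of f to the one-point compactification X̃ fixing the point at infinity. Then sup_μ h_μ(f) = sup_{μ̃} h_{μ̃}(f̃), where the suprema are taken over all f-invariant Borel probability measures μ on X and over all f̃-invariant Borel probability measures μ̃ on X̃, respectively. -/

import Mathlib

open Set Filter Topology ENNReal

section Defs

variable {X Y : Type*}

/-- An open set with compact complement. -/
def IsCoCompactOpen [TopologicalSpace X] (U : Set X) : Prop :=
  IsOpen U ∧ IsCompact Uᶜ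

/-- A co-compact open cover: every member is co-compact open, and the family covers `X`. -/
def IsCoCompactCover [TopologicalSpace X] (𝒰 : Set (Set X)) : Prop :=
  (∀ U ∈ 𝒰, IsCoCompactOpen U) ∧ ⋃₀ 𝒰 = Set.univ

/-- A perfect map: continuous, closed, with compact fibers. -/
def IsPerfectMap [TopologicalSpace X] [TopologicalSpace Y] (f : X → Y) : Prop :=
  Continuous f ∧ IsClosedMap f ∧ ∀ y : Y, IsCompact (f ⁻¹' {y})

/-- `coverN 𝒰` : the minimal cardinality of a finite subcover of `𝒰`. -/
noncomputable def coverN (𝒰 : Set (Set X)) : ℕ :=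
  sInf {n | ∃ 𝒱 : Finset (Set X), ↑𝒱 ⊆ 𝒰 ∧ ⋃₀ (𝒱 : Set (Set X)) = Set.univ ∧ 𝒱.card = n}

/-- `H(𝒰) = log N(𝒰)`, as a real number. -/
noncomputable def covHR (𝒰 : Set (Set X)) : ℝ :=
  Real.log (coverN 𝒰)

/-- `H(𝒰) = log N(𝒰)`, as an extended nonnegative real. -/
noncomputable def covH (𝒰 : Set (Set X)) : ℝ≥0∞ :=
  ENNReal.ofReal (Real.log (coverN 𝒰))

/-- The join `𝒰 ∨ 𝒱 = {U ∩ V : U ∈ 𝒰, V ∈ 𝒱}` of two covers. -/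
def covJoin (𝒰 𝒱 : Set (Set X)) : Set (Set X) :=
  Set.image2 (· ∩ ·) 𝒰 𝒱

/-- The preimage cover `f⁻¹(𝒰) = {f⁻¹(U) : U ∈ 𝒰}`. -/
def preimCover (f : X → Y) (𝒰 : Set (Set Y)) : Set (Set X) :=
  (fun U => f ⁻¹' U) '' 𝒰

/-- The iterated join `⋁_{i=0}^{n-1} f⁻ⁱ(𝒰)`. -/
def iterJoin (f : X → X) (𝒰 : Set (Set X)) (n : ℕ) : Set (Set X) :=
  {W | ∃ u : Fin n → Set X, (∀ i, u i ∈ 𝒰) ∧ W = ⋂ i : Fin n, f^[(i : ℕ)] ⁻¹' u i}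

/-- The co-compact entropy of `f` relative to the cover `𝒰`:
`c(f,𝒰) = lim_n (1/n) H(⋁_{i=0}^{n-1} f⁻ⁱ(𝒰))` (realized as a `limsup`). -/
noncomputable def cEntCover (f : X → X) (𝒰 : Set (Set X)) : ℝ≥0∞ :=
  Filter.atTop.limsup fun n : ℕ => covH (iterJoin f 𝒰 n) / (n : ℝ≥0∞)

/-- The co-compact entropy `c(f) = sup_𝒰 c(f,𝒰)` over all co-compact open covers. -/
noncomputable def cEnt [TopologicalSpace X] (f : X → X) : ℝ≥0∞ :=
  ⨆ (𝒰 : Set (Set X)) (_ : IsCoCompactCover 𝒰), cEntCover f 𝒰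

end Defs

section MetricDefs

variable {X : Type*}

/-- `E` is `(n,ε)`-separated for `f` w.r.t. the distance function `d`. -/
def IsNSepSet (d : X → X → ℝ) (f : X → X) (n : ℕ) (ε : ℝ) (E : Set X) : Prop :=
  ∀ x ∈ E, ∀ y ∈ E, x ≠ y → ∃ j < n, ε < d (f^[j] x) (f^[j] y)

/-- `s_n(ε,K,f)`: the maximal cardinality of an `(n,ε)`-separated subset of `K`. -/
noncomputable def sepCard (d : X → X → ℝ) (f : X → X) (n : ℕ) (ε : ℝ) (K : Set X) : ℝ≥0∞ :=
  ⨆ (E : Finset X) (_ : ↑E ⊆ K ∧ IsNSepSet d f n ε ↑E), (E.card : ℝ≥0∞)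

/-- Logarithm on `ℝ≥0∞`, with `elog ⊤ = ⊤`, truncated at `0` below. -/
noncomputable def elog (x : ℝ≥0∞) : ℝ≥0∞ :=
  if x = ⊤ then ⊤ else ENNReal.ofReal (Real.log x.toReal)

/-- `s(ε,K,f) = limsup_n (1/n) log s_n(ε,K,f)`. -/
noncomputable def sepEntEps (d : X → X → ℝ) (f : X → X) (ε : ℝ) (K : Set X) : ℝ≥0∞ :=
  Filter.atTop.limsup fun n : ℕ => elog (sepCard d f n ε K) / (n : ℝ≥0∞)

/-- `s(K,f) = lim_{ε→0} s(ε,K,f)` (the limit of the monotone family, i.e. the supremum). -/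
noncomputable def sepEnt (d : X → X → ℝ) (f : X → X) (K : Set X) : ℝ≥0∞ :=
  ⨆ (ε : ℝ) (_ : 0 < ε), sepEntEps d f ε K

/-- Bowen's entropy `h_d(f) = sup_K s(K,f)`, supremum over compact subsets. -/
noncomputable def bowenEnt [TopologicalSpace X] (d : X → X → ℝ) (f : X → X) : ℝ≥0∞ :=
  ⨆ (K : Set X) (_ : IsCompact K), sepEnt d f K

/-- The `d`-entropy `h^d(f) = s(X,f)`. -/
noncomputable def dEnt (d : X → X → ℝ) (f : X → X) : ℝ≥0∞ :=
  sepEnt d f Set.univ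

/-- A metric space structure on `X` is of compact type (relative to the ambient topology on
`X`) if it extends to a metric on the one-point compactification `OnePoint X` inducing the
topology of `OnePoint X`. -/
def IsCompactTypeMetric [TopologicalSpace X] (m : MetricSpace X) : Prop :=
  ∃ mc : MetricSpace (OnePoint X),
    mc.toUniformSpace.toTopologicalSpace = (inferInstance : TopologicalSpace (OnePoint X)) ∧
    ∀ x y : X, mc.dist ↑x ↑y = m.dist x y

/-- The extension of `f : X → X` to the one-point compactification, fixing `∞`. -/
def onePointExtend (f : X → X) : OnePoint X → OnePoint X :=
  fun p => Option.rec OnePoint.infty (fun x => (↑(f x) : OnePoint X)) p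

end MetricDefs

section MeasureDefs

open MeasureTheory

variable {X : Type*}

/-- A finite Borel partition of `X`. -/
def IsFinBorelPartition [MeasurableSpace X] (P : Finset (Set X)) : Prop :=
  (∀ A ∈ P, MeasurableSet A) ∧ ⋃₀ (P : Set (Set X)) = Set.univ ∧
    ∀ A ∈ P, ∀ B ∈ P, A ≠ B → A ∩ B = ∅

/-- `φ(x) = -x log x` (with `φ(0) = 0`). -/
noncomputable def phiEnt (x : ℝ) : ℝ := -(x * Real.log x)

/-- `H_μ(⋁_{i=0}^{n-1} f⁻ⁱ𝒜) = Σ_{B} φ(μ(B))`, the sum over the cells of the iterated join of the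
partition `P` (cells indexed by tuples of members of `P`; repeated empty cells contribute `0`). -/
noncomputable def partEntSum [MeasurableSpace X] (μ : Measure X) (f : X → X)
    (P : Finset (Set X)) (n : ℕ) : ℝ :=
  ∑ u : Fin n → {A // A ∈ P}, phiEnt ((μ (⋂ i : Fin n, f^[(i : ℕ)] ⁻¹' (u i : Set X))).toReal)

/-- The measure-theoretic (Kolmogorov–Sinai) entropy `h_μ(f)`. -/
noncomputable def measEnt [MeasurableSpace X] (μ : Measure X) (f : X → X) : ℝ≥0∞ :=
  ⨆ (P : Finset (Set X)) (_ : IsFinBorelPartition P),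
    Filter.atTop.limsup fun n : ℕ => ENNReal.ofReal (partEntSum μ f P n) / (n : ℝ≥0∞)

end MeasureDefs

section Aux

open MeasureTheory OnePoint

attribute [local instance] Classical.propDecidable
set_option linter.unusedSectionVars false

namespace OnePointEntropyAux

/-! ### Real-number lemmas about `phiEnt` -/

lemma phiEnt_zero : phiEnt 0 = 0 := by simp [phiEnt]

lemma phiEnt_one : phiEnt 1 = 0 := by simp [phiEnt]

lemma phiEnt_nonneg {x : ℝ} (h0 : 0 ≤ x) (h1 : x ≤ 1) : 0 ≤ phiEnt x := by
  have hl : Real.log x ≤ 0 := Real.log_nonpos h0 h1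
  have : x * Real.log x ≤ 0 := mul_nonpos_of_nonneg_of_nonpos h0 hl
  simp only [phiEnt]; linarith

lemma phiEnt_le_one {x : ℝ} (h0 : 0 ≤ x) : phiEnt x ≤ 1 := by
  rcases eq_or_lt_of_le h0 with h | h
  · simp [phiEnt, ← h]
  · have hlog : Real.log x⁻¹ ≤ x⁻¹ - 1 := Real.log_le_sub_one_of_pos (by positivity)
    rw [Real.log_inv] at hlog
    have hx : x * x⁻¹ = 1 := mul_inv_cancel₀ h.ne'
    have := mul_le_mul_of_nonneg_left hlog h0
    simp only [phiEnt]
    nlinarith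

lemma phiEnt_scale {s x : ℝ} (hs0 : 0 < s) (hs1 : s ≤ 1) (h0 : 0 ≤ x) (h1 : x ≤ 1) :
    phiEnt (s * x) ≤ phiEnt x + (-Real.log s) * x := by
  rcases eq_or_lt_of_le h0 with h | h
  · simp [phiEnt, ← h]
  · have hmul : Real.log (s * x) = Real.log s + Real.log x := Real.log_mul hs0.ne' h.ne'
    have hlogs : Real.log s ≤ 0 := Real.log_nonpos hs0.le hs1
    have hlogx : Real.log x ≤ 0 := Real.log_nonpos h0 h1
    simp only [phiEnt, hmul]
    nlinarith [mul_nonneg (mul_nonneg h0 (sub_nonneg.2 hs1))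
      (neg_nonneg.2 (add_nonpos hlogx hlogs))]

/-! ### ENNReal helpers -/

lemma toReal_le_one {a : ℝ≥0∞} (h : a ≤ 1) : a.toReal ≤ 1 := by
  simpa using ENNReal.toReal_mono ENNReal.one_ne_top h

/-! ### A sum comparison lemma -/

lemma sum_le_sum_inj {α β : Type*} [Fintype α] [Fintype β] (e : α → β) (F : α → ℝ) (G : β → ℝ)
    (hFG : ∀ a, F a = G (e a)) (hinj : ∀ a₁ a₂, F a₁ ≠ 0 → e a₁ = e a₂ → a₁ = a₂)
    (hG : ∀ b, 0 ≤ G b) : ∑ a, F a ≤ ∑ b, G b := by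
  classical
  rw [← Finset.sum_filter_ne_zero Finset.univ (f := F)]
  rw [Finset.sum_congr rfl (fun a _ => hFG a)]
  have himg : ∑ b ∈ (Finset.univ.filter fun a => F a ≠ 0).image e, G b
      = ∑ a ∈ Finset.univ.filter fun a => F a ≠ 0, G (e a) :=
    Finset.sum_image fun a₁ h₁ a₂ _ h =>
      hinj a₁ a₂ (by simpa using (Finset.mem_filter.1 h₁).2) h
  rw [← himg]
  exact Finset.sum_le_sum_of_subset_of_nonneg (Finset.subset_univ _) fun b _ _ => hG b

/-! ### Sum of measures of iterated-join cells -/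

lemma sum_measure_iInter_le_one {Y : Type*} [MeasurableSpace Y] (μ : Measure Y)
    [IsProbabilityMeasure μ] {g : Y → Y} (hg : Measurable g) {κ : Type*} [Fintype κ] {n : ℕ}
    (A : κ → Fin n → Set Y) (hm : ∀ k i, MeasurableSet (A k i))
    (hd : ∀ k k', k ≠ k' → ∃ i, A k i ∩ A k' i = ∅) :
    ∑ k, μ (⋂ i : Fin n, g^[(i : ℕ)] ⁻¹' A k i) ≤ 1 := by
  classical
  have hmc : ∀ k, MeasurableSet (⋂ i : Fin n, g^[(i : ℕ)] ⁻¹' A k i) :=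
    fun k => MeasurableSet.iInter fun i => (hg.iterate _) (hm k i)
  have hdis : Set.PairwiseDisjoint (↑(Finset.univ : Finset κ))
      (fun k => ⋂ i : Fin n, g^[(i : ℕ)] ⁻¹' A k i) := by
    intro k _ k' _ hkk'
    obtain ⟨i, hi⟩ := hd k k' hkk'
    refine Set.disjoint_left.2 fun y hy hy' => ?_
    have h1 := Set.mem_iInter.1 hy i
    have h2 := Set.mem_iInter.1 hy' i
    have : g^[(i : ℕ)] y ∈ A k i ∩ A k' i := ⟨h1, h2⟩
    rw [hi] at this
    exact this
  calc ∑ k, μ (⋂ i : Fin n, g^[(i : ℕ)] ⁻¹' A k i)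
      = μ (⋃ k ∈ (Finset.univ : Finset κ), ⋂ i : Fin n, g^[(i : ℕ)] ⁻¹' A k i) :=
        (measure_biUnion_finset hdis fun k _ => hmc k).symm
    _ ≤ 1 := prob_le_one

/-! ### limsup comparison -/

lemma limsup_aux {a b : ℕ → ℝ} (C : ℝ) (h : ∀ n, a n ≤ b n + C) :
    Filter.atTop.limsup (fun n : ℕ => ENNReal.ofReal (a n) / (n : ℝ≥0∞)) ≤
      Filter.atTop.limsup (fun n : ℕ => ENNReal.ofReal (b n) / (n : ℝ≥0∞)) := by
  set g : ℕ → ℝ≥0∞ := fun n : ℕ => ENNReal.ofReal (b n) / (n : ℝ≥0∞) with hg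
  set hh : ℕ → ℝ≥0∞ := fun n : ℕ => ENNReal.ofReal C / (n : ℝ≥0∞) with hhdef
  have hpt : ∀ n : ℕ, ENNReal.ofReal (a n) / (n : ℝ≥0∞) ≤ g n + hh n := by
    intro n
    rw [hg, hhdef, ← ENNReal.add_div]
    exact ENNReal.div_le_div_right
      ((ENNReal.ofReal_le_ofReal (h n)).trans ENNReal.ofReal_add_le) _
  have h2 : Filter.Tendsto hh Filter.atTop (nhds 0) := by
    have h1 : Filter.Tendsto (fun n : ℕ => ((n : ℝ≥0∞))⁻¹) Filter.atTop (nhds 0) :=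
      ENNReal.tendsto_inv_nat_nhds_zero
    have h2 := ENNReal.Tendsto.const_mul (a := ENNReal.ofReal C) h1
      (Or.inr ENNReal.ofReal_ne_top)
    rw [mul_zero] at h2
    simpa [hhdef, div_eq_mul_inv] using h2
  refine ENNReal.le_of_forall_pos_le_add fun ε hε hL => ?_
  set δ : ℝ≥0∞ := (ε : ℝ≥0∞) / 2 with hδdef
  have hδ : 0 < δ := ENNReal.div_pos (by exact_mod_cast hε.ne') (by norm_num)
  have hev1 : ∀ᶠ n in Filter.atTop, hh n < δ := h2.eventually_lt_const hδ
  have hev2 : ∀ᶠ n in Filter.atTop, g n < Filter.atTop.limsup g + δ :=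
    Filter.eventually_lt_of_limsup_lt (ENNReal.lt_add_right hL.ne hδ.ne')
  have hev : ∀ᶠ n in Filter.atTop,
      ENNReal.ofReal (a n) / (n : ℝ≥0∞) ≤ Filter.atTop.limsup g + (ε : ℝ≥0∞) := by
    filter_upwards [hev1, hev2] with n h1 h2'
    calc ENNReal.ofReal (a n) / (n : ℝ≥0∞) ≤ g n + hh n := hpt n
      _ ≤ (Filter.atTop.limsup g + δ) + δ := add_le_add h2'.le h1.le
      _ = Filter.atTop.limsup g + (δ + δ) := by rw [add_assoc]
      _ = Filter.atTop.limsup g + (ε : ℝ≥0∞) := by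
          rw [hδdef, ENNReal.add_halves]
  exact Filter.limsup_le_of_le (by isBoundedDefault) hev

/-! ### OnePoint lemmas -/

variable {X : Type*} [TopologicalSpace X] [MeasurableSpace X] [BorelSpace X]
  [MeasurableSpace (OnePoint X)] [BorelSpace (OnePoint X)]

local notation "ι" => ((↑·) : X → OnePoint X)

lemma mEmb : MeasurableEmbedding ι :=
  OnePoint.isOpenEmbedding_coe.measurableEmbedding

lemma measurableSet_infty : MeasurableSet ({OnePoint.infty} : Set (OnePoint X)) := by
  rw [← OnePoint.compl_range_coe]
  exact OnePoint.isOpen_range_coe.measurableSet.compl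

variable (f : X → X)

lemma opExt_coe (x : X) : onePointExtend f ↑x = ↑(f x) := rfl

lemma opExt_infty : onePointExtend f OnePoint.infty = OnePoint.infty := rfl

lemma opExt_iter_coe (k : ℕ) (x : X) : (onePointExtend f)^[k] (↑x) = ↑(f^[k] x) := by
  induction k generalizing x with
  | zero => rfl
  | succ k ih =>
    rw [Function.iterate_succ_apply, Function.iterate_succ_apply, opExt_coe, ih]

lemma opExt_iter_infty (k : ℕ) : (onePointExtend f)^[k] OnePoint.infty = OnePoint.infty :=
  Function.iterate_fixed rfl k

lemma preim_coe_opExt_iter (k : ℕ) (S : Set (OnePoint X)) :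
    ι ⁻¹' ((onePointExtend f)^[k] ⁻¹' S) = f^[k] ⁻¹' (ι ⁻¹' S) := by
  ext x
  simp [Set.mem_preimage, opExt_iter_coe]

lemma opExt_preim_image (A : Set X) :
    onePointExtend f ⁻¹' (ι '' A) = ι '' (f ⁻¹' A) := by
  ext p
  cases p with
  | infty =>
    simp only [Set.mem_preimage]
    constructor
    · rintro ⟨x, -, hx⟩
      exact absurd hx (OnePoint.coe_ne_infty x)
    · rintro ⟨x, -, hx⟩
      exact absurd hx (OnePoint.coe_ne_infty x)
  | coe x =>
    constructor
    · rintro ⟨y, hy, h⟩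
      have : f x = y := OnePoint.coe_injective h.symm
      exact ⟨x, by rwa [Set.mem_preimage, this], rfl⟩
    · rintro ⟨y, hy, h⟩
      have : y = x := OnePoint.coe_injective h
      subst this
      exact ⟨f y, hy, rfl⟩

variable {f}

lemma measurable_opExt (hf : Measurable f) : Measurable (onePointExtend f) := by
  intro S hS
  have key : onePointExtend f ⁻¹' S = ι '' (f ⁻¹' (ι ⁻¹' S)) ∪ ({OnePoint.infty} ∩ S) := by
    ext p
    cases p with
    | infty =>
      simp only [Set.mem_preimage, opExt_infty, Set.mem_union, Set.mem_inter_iff,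
        Set.mem_singleton_iff]
      constructor
      · intro h; exact Or.inr ⟨by trivial, h⟩
      · rintro (⟨x, -, hx⟩ | ⟨-, h⟩)
        · exact absurd hx (OnePoint.coe_ne_infty x)
        · exact h
    | coe x =>
      simp only [Set.mem_preimage, Set.mem_union, Set.mem_inter_iff, Set.mem_singleton_iff]
      constructor
      · intro h
        exact Or.inl ⟨x, h, rfl⟩
      · rintro (⟨y, hy, h⟩ | ⟨h, -⟩)
        · have : y = x := OnePoint.coe_injective h
          subst this; exact hy
        · exact absurd h (OnePoint.coe_ne_infty x)
  rw [key]
  exact (mEmb.measurableSet_image' (hf (mEmb.measurable hS))).union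
    (measurableSet_infty.inter hS)

lemma partition_preimage {P : Finset (Set (OnePoint X))} (hP : IsFinBorelPartition P) :
    IsFinBorelPartition (P.image fun A => ι ⁻¹' A) := by
  refine ⟨?_, ?_, ?_⟩
  · intro A hA
    obtain ⟨B, hB, rfl⟩ := Finset.mem_image.1 hA
    exact mEmb.measurable (hP.1 B hB)
  · rw [Finset.coe_image, Set.sUnion_image, ← Set.preimage_sUnion, hP.2.1, Set.preimage_univ]
  · intro A hA B hB hAB
    obtain ⟨A', hA', rfl⟩ := Finset.mem_image.1 hA
    obtain ⟨B', hB', rfl⟩ := Finset.mem_image.1 hB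
    have hne : A' ≠ B' := by rintro rfl; exact hAB rfl
    rw [← Set.preimage_inter, hP.2.2 A' hA' B' hB' hne, Set.preimage_empty]

lemma partition_image {Q : Finset (Set X)} (hQ : IsFinBorelPartition Q) :
    IsFinBorelPartition
      (insert ({OnePoint.infty} : Set (OnePoint X)) (Q.image fun A => ι '' A)) := by
  refine ⟨?_, ?_, ?_⟩
  · intro A hA
    rcases Finset.mem_insert.1 hA with rfl | hA
    · exact measurableSet_infty
    · obtain ⟨B, hB, rfl⟩ := Finset.mem_image.1 hA
      exact mEmb.measurableSet_image' (hQ.1 B hB)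
  · rw [Finset.coe_insert, Set.sUnion_insert, Finset.coe_image, Set.sUnion_image]
    have himg : ⋃ x ∈ (↑Q : Set (Set X)), ι '' x = ι '' ⋃₀ (↑Q : Set (Set X)) := by
      rw [← Set.sUnion_image, Set.image_sUnion]
    rw [himg, hQ.2.1, Set.image_univ, Set.union_comm]
    exact OnePoint.range_coe_union_infty
  · have hdis : ∀ B : Set X, ({OnePoint.infty} : Set (OnePoint X)) ∩ ι '' B = ∅ := by
      intro B
      refine Set.eq_empty_of_forall_notMem fun p hp => ?_
      obtain ⟨x, -, hx⟩ := hp.2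
      rw [← hx] at hp
      exact OnePoint.coe_ne_infty x (Set.mem_singleton_iff.1 hp.1)
    intro A hA B hB hAB
    rcases Finset.mem_insert.1 hA with rfl | hA' <;>
      rcases Finset.mem_insert.1 hB with rfl | hB'
    · exact absurd rfl hAB
    · obtain ⟨B', hB2, rfl⟩ := Finset.mem_image.1 hB'
      exact hdis B'
    · obtain ⟨A', hA2, rfl⟩ := Finset.mem_image.1 hA'
      rw [Set.inter_comm]
      exact hdis A'
    · obtain ⟨A', hA2, rfl⟩ := Finset.mem_image.1 hA'
      obtain ⟨B', hB2, rfl⟩ := Finset.mem_image.1 hB'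
      have hne : A' ≠ B' := by rintro rfl; exact hAB rfl
      rw [← Set.image_inter OnePoint.coe_injective, hQ.2.2 A' hA2 B' hB2 hne, Set.image_empty]
lemma cell_measurable_onePoint (hfm : Measurable f) {n : ℕ}
    (u : Fin n → Set (OnePoint X)) (hu : ∀ i, MeasurableSet (u i)) :
    MeasurableSet (⋂ i : Fin n, (onePointExtend f)^[(i : ℕ)] ⁻¹' u i) :=
  MeasurableSet.iInter fun i => ((measurable_opExt hfm).iterate _) (hu i)

lemma map_cell_eq (hfm : Measurable f) (μ : Measure X) {n : ℕ}
    (u : Fin n → Set X) (hu : ∀ i, MeasurableSet (u i)) :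
    (μ.map ι) (⋂ i : Fin n, (onePointExtend f)^[(i : ℕ)] ⁻¹' (ι '' u i)) =
      μ (⋂ i : Fin n, f^[(i : ℕ)] ⁻¹' u i) := by
  rw [Measure.map_apply mEmb.measurable
    (cell_measurable_onePoint hfm _ fun i => mEmb.measurableSet_image' (hu i))]
  congr 1
  rw [Set.preimage_iInter]
  refine Set.iInter_congr fun i => ?_
  rw [preim_coe_opExt_iter, Set.preimage_image_eq _ OnePoint.coe_injective]

lemma measEnt_le_map (hfm : Measurable f) (μ : Measure X) [IsProbabilityMeasure μ] :
    measEnt μ f ≤ measEnt (μ.map ι) (onePointExtend f) := by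
  haveI : IsProbabilityMeasure (μ.map ι) :=
    Measure.isProbabilityMeasure_map mEmb.measurable.aemeasurable
  refine iSup₂_le fun Q hQ => ?_
  refine le_iSup₂_of_le (insert ({OnePoint.infty} : Set (OnePoint X)) (Q.image fun A => ι '' A))
    (partition_image hQ) ?_
  refine Filter.limsup_le_limsup (Filter.Eventually.of_forall fun n => ?_)
  refine ENNReal.div_le_div_right (ENNReal.ofReal_le_ofReal ?_) _
  unfold partEntSum
  refine sum_le_sum_inj
    (fun u i => (⟨ι '' (u i : Set X), Finset.mem_insert_of_mem
      (Finset.mem_image_of_mem _ (u i).2)⟩ :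
        {A // A ∈ insert ({OnePoint.infty} : Set (OnePoint X)) (Q.image fun A => ι '' A)}))
    _ _ (fun u => ?_) (fun u₁ u₂ _ he => ?_) (fun u => ?_)
  · exact congrArg (fun z : ℝ≥0∞ => phiEnt z.toReal)
      (map_cell_eq hfm μ (fun i => (u i : Set X)) fun i => hQ.1 _ (u i).2).symm
  · funext i
    have := congrFun he i
    have h2 : ι '' (u₁ i : Set X) = ι '' (u₂ i : Set X) := by
      simpa using this
    exact Subtype.ext ((Set.image_injective.2 OnePoint.coe_injective) h2)
  · exact phiEnt_nonneg ENNReal.toReal_nonneg (toReal_le_one prob_le_one)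
lemma measEnt_eq_zero_of_infty (hfm : Measurable f) (ν : Measure (OnePoint X))
    [IsProbabilityMeasure ν] (hc : ν (Set.range ι) = 0) :
    measEnt ν (onePointExtend f) ≤ 0 := by
  have hnuinf : ν ({OnePoint.infty} : Set (OnePoint X)) = 1 := by
    rw [← OnePoint.compl_range_coe, measure_compl OnePoint.isOpen_range_coe.measurableSet
      (measure_ne_top ν _), hc, measure_univ, tsub_zero]
  refine iSup₂_le fun P hP => ?_
  have hzero : ∀ n : ℕ, partEntSum ν (onePointExtend f) P n = 0 := by
    intro n
    refine Finset.sum_eq_zero fun u _ => ?_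
    set cell := ⋂ i : Fin n, (onePointExtend f)^[(i : ℕ)] ⁻¹' (u i : Set (OnePoint X)) with hcell
    by_cases hinf : OnePoint.infty ∈ cell
    · have h1 : ν cell = 1 := le_antisymm prob_le_one (by
        calc (1 : ℝ≥0∞) = ν {OnePoint.infty} := hnuinf.symm
          _ ≤ ν cell := measure_mono (Set.singleton_subset_iff.2 hinf))
      simp [h1, phiEnt]
    · have hsub : cell ⊆ Set.range ι := by
        intro p hp
        cases p with
        | infty => exact absurd hp hinf
        | coe x => exact Set.mem_range_self x
      have h0 : ν cell = 0 := measure_mono_null hsub hc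
      simp [h0, phiEnt]
  have heq : (fun n : ℕ => ENNReal.ofReal (partEntSum ν (onePointExtend f) P n) / (n : ℝ≥0∞))
      = fun _ => 0 := funext fun n => by simp [hzero n]
  rw [heq, Filter.limsup_const]

set_option maxHeartbeats 3200000 in
lemma measEnt_opExt_le (hfm : Measurable f) (ν : Measure (OnePoint X)) [IsProbabilityMeasure ν]
    (hinv : ν.map (onePointExtend f) = ν) (hs : ν (Set.range ι) ≠ 0) :
    ∃ μ : Measure X, IsProbabilityMeasure μ ∧ μ.map f = μ ∧
      measEnt ν (onePointExtend f) ≤ measEnt μ f := by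
  set s : ℝ≥0∞ := ν (Set.range ι) with hsdef
  have hst : s ≠ ⊤ := (prob_le_one.trans_lt ENNReal.one_lt_top).ne
  set μ : Measure X := s⁻¹ • ν.comap ι with hμdef
  have hμS : ∀ S : Set X, μ S = s⁻¹ * ν (ι '' S) := by
    intro S
    rw [hμdef, Measure.smul_apply, mEmb.comap_apply, smul_eq_mul]
  have hprob : IsProbabilityMeasure μ := by
    constructor
    rw [hμS, Set.image_univ, ← hsdef, ENNReal.inv_mul_cancel hs hst]
  haveI := hprob
  have hinvμ : μ.map f = μ := by
    refine Measure.ext fun S hS => ?_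
    rw [Measure.map_apply hfm hS, hμS, hμS, ← opExt_preim_image f S,
      ← Measure.map_apply (measurable_opExt hfm) (mEmb.measurableSet_image' hS), hinv]
  have hkey : ∀ S : Set (OnePoint X),
      ν S = ν (S ∩ {OnePoint.infty}) + s * μ (ι ⁻¹' S) := by
    intro S
    have h1 : s * μ (ι ⁻¹' S) = ν (S ∩ Set.range ι) := by
      rw [hμS, ← mul_assoc, ENNReal.mul_inv_cancel hs hst, one_mul,
        Set.image_preimage_eq_inter_range]
    have h2 : S \ {OnePoint.infty} = S ∩ Set.range ι := by
      rw [Set.diff_eq, ← OnePoint.compl_range_coe, compl_compl]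
    rw [h1, ← h2, measure_inter_add_diff S measurableSet_infty]
  refine ⟨μ, hprob, hinvμ, ?_⟩
  refine iSup₂_le fun P hP => ?_
  obtain ⟨Ainf, hAinfP, hAinfmem⟩ : ∃ A ∈ P, (OnePoint.infty : OnePoint X) ∈ A := by
    have hmem : (OnePoint.infty : OnePoint X) ∈ ⋃₀ (↑P : Set (Set (OnePoint X))) := by
      rw [hP.2.1]; trivial
    obtain ⟨A, hA, hmemA⟩ := hmem
    exact ⟨A, hA, hmemA⟩
  have huniq : ∀ B ∈ P, (OnePoint.infty : OnePoint X) ∈ B → B = Ainf := by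
    intro B hB hmem
    by_contra hne
    have hd := hP.2.2 B hB Ainf hAinfP hne
    exact absurd (Set.mem_inter hmem hAinfmem) (by rw [hd]; exact Set.notMem_empty _)
  refine le_iSup₂_of_le (P.image fun A => ι ⁻¹' A) (partition_preimage hP) ?_
  set L : ℝ := -Real.log s.toReal with hLdef
  have hs1 : s ≤ 1 := prob_le_one
  have hsr0 : 0 < s.toReal := ENNReal.toReal_pos hs hst
  have hsr1 : s.toReal ≤ 1 := toReal_le_one hs1
  have hL0 : 0 ≤ L := by
    rw [hLdef, neg_nonneg]; exact Real.log_nonpos hsr0.le hsr1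
  refine limsup_aux (C := 1 + L) fun n => ?_
  classical
  set q : (Fin n → {A // A ∈ P}) → ℝ≥0∞ :=
    fun u => μ (⋂ i : Fin n, f^[(i : ℕ)] ⁻¹' (ι ⁻¹' (u i : Set (OnePoint X)))) with hqdef
  have hqle : ∀ u, q u ≤ 1 := fun u => prob_le_one
  set u0 : Fin n → {A // A ∈ P} := (fun _ => ⟨Ainf, hAinfP⟩ : Fin n → {A // A ∈ P}) with hu0
  have hcellm : ∀ u : Fin n → {A // A ∈ P},
      ν (⋂ i : Fin n, (onePointExtend f)^[(i : ℕ)] ⁻¹' (u i : Set (OnePoint X)))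
        = (if u = u0 then ν ({OnePoint.infty} : Set (OnePoint X)) else 0) + s * q u := by
    intro u
    rw [hkey]
    congr 1
    · by_cases hc : u = u0
      · have hmem : (OnePoint.infty : OnePoint X) ∈
            ⋂ i : Fin n, (onePointExtend f)^[(i : ℕ)] ⁻¹' (u i : Set (OnePoint X)) :=
          Set.mem_iInter.2 fun i => by
            rw [Set.mem_preimage, opExt_iter_infty, hc]
            exact hAinfmem
        rw [if_pos hc, Set.inter_eq_right.2 (Set.singleton_subset_iff.2 hmem)]
      · have hnmem : (OnePoint.infty : OnePoint X) ∉
            ⋂ i : Fin n, (onePointExtend f)^[(i : ℕ)] ⁻¹' (u i : Set (OnePoint X)) := by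
          intro hmem
          refine hc (funext fun i => Subtype.ext ?_)
          have := Set.mem_iInter.1 hmem i
          rw [Set.mem_preimage, opExt_iter_infty] at this
          exact huniq _ (u i).2 this
        have hempty : (⋂ i : Fin n, (onePointExtend f)^[(i : ℕ)] ⁻¹'
            (u i : Set (OnePoint X))) ∩ {OnePoint.infty} = ∅ := by
          refine Set.eq_empty_of_forall_notMem fun p hp => ?_
          rw [Set.mem_singleton_iff.1 hp.2] at hp
          exact hnmem hp.1
        rw [if_neg hc, hempty, measure_empty]
    · congr 1
      rw [Set.preimage_iInter]
      exact congrArg μ (Set.iInter_congr fun i => preim_coe_opExt_iter f _ _)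
  have hreal : ∀ u : Fin n → {A // A ∈ P},
      (ν (⋂ i : Fin n, (onePointExtend f)^[(i : ℕ)] ⁻¹' (u i : Set (OnePoint X)))).toReal
        = (if u = u0 then (ν ({OnePoint.infty} : Set (OnePoint X))).toReal else 0)
          + s.toReal * (q u).toReal := by
    intro u
    rw [hcellm u, ENNReal.toReal_add, ENNReal.toReal_mul]
    · congr 1
      split_ifs <;> simp
    · split_ifs
      · exact measure_ne_top ν _
      · exact ENNReal.zero_ne_top
    · exact ENNReal.mul_ne_top hst ((hqle u).trans_lt ENNReal.one_lt_top).ne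
  have hterm : ∀ u : Fin n → {A // A ∈ P},
      phiEnt ((ν (⋂ i : Fin n, (onePointExtend f)^[(i : ℕ)] ⁻¹'
          (u i : Set (OnePoint X)))).toReal) ≤
        (if u = u0 then (1 : ℝ) else 0) + (phiEnt ((q u).toReal) + L * (q u).toReal) := by
    intro u
    have hq0 : 0 ≤ (q u).toReal := ENNReal.toReal_nonneg
    have hq1 : (q u).toReal ≤ 1 := toReal_le_one (hqle u)
    have hphiq : 0 ≤ phiEnt ((q u).toReal) := phiEnt_nonneg hq0 hq1
    have hLq : 0 ≤ L * (q u).toReal := mul_nonneg hL0 hq0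
    rw [hreal u]
    by_cases hc : u = u0
    · rw [if_pos hc, if_pos hc]
      have h1 : phiEnt ((ν ({OnePoint.infty} : Set (OnePoint X))).toReal
          + s.toReal * (q u).toReal) ≤ 1 :=
        phiEnt_le_one (add_nonneg ENNReal.toReal_nonneg (mul_nonneg hsr0.le hq0))
      linarith
    · rw [if_neg hc, if_neg hc, zero_add, zero_add]
      exact phiEnt_scale hsr0 hsr1 hq0 hq1
  have hsum1 : (∑ u : Fin n → {A // A ∈ P}, if u = u0 then (1 : ℝ) else 0) = 1 :=
    Fintype.sum_ite_eq' u0 fun _ => (1 : ℝ)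
  have hsum2 : (∑ u : Fin n → {A // A ∈ P}, phiEnt ((q u).toReal)) ≤
      partEntSum μ f (P.image fun A => ι ⁻¹' A) n := by
    unfold partEntSum
    refine sum_le_sum_inj
      (fun u i => (⟨ι ⁻¹' (u i : Set (OnePoint X)),
        Finset.mem_image_of_mem _ (u i).2⟩ : {A // A ∈ P.image fun A => ι ⁻¹' A}))
      _ _ (fun u => by rw [hqdef]) (fun u₁ u₂ hF he => ?_) (fun u => ?_)
    · by_contra hne
      obtain ⟨i, hi⟩ := Function.ne_iff.1 hne
      have hvne : (u₁ i : Set (OnePoint X)) ≠ (u₂ i : Set (OnePoint X)) :=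
        fun h => hi (Subtype.ext h)
      have hdisj := hP.2.2 _ (u₁ i).2 _ (u₂ i).2 hvne
      have hpre : ι ⁻¹' (u₁ i : Set (OnePoint X)) = ι ⁻¹' (u₂ i : Set (OnePoint X)) := by
        have := congrFun he i
        exact congrArg Subtype.val this
      have hempty : ι ⁻¹' (u₁ i : Set (OnePoint X)) = ∅ := by
        have : ι ⁻¹' (u₁ i : Set (OnePoint X)) ⊆
            ι ⁻¹' ((u₁ i : Set (OnePoint X)) ∩ (u₂ i : Set (OnePoint X))) := by
          intro x hx
          exact ⟨hx, by rw [← Set.mem_preimage, ← hpre] at *; exact hx⟩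
        rw [hdisj, Set.preimage_empty] at this
        exact Set.subset_empty_iff.1 this
      have hq0 : q u₁ = 0 := by
        refine measure_mono_null ?_ (measure_empty (μ := μ))
        refine (Set.iInter_subset _ i).trans ?_
        rw [hempty, Set.preimage_empty]
      exact hF (by rw [hqdef] at hq0 ⊢; rw [hq0]; simp [phiEnt])
    · exact phiEnt_nonneg ENNReal.toReal_nonneg (toReal_le_one prob_le_one)
  have hsum3 : (∑ u : Fin n → {A // A ∈ P}, L * (q u).toReal) ≤ L := by
    have hle : (∑ u : Fin n → {A // A ∈ P}, q u) ≤ 1 := by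
      have hd' : ∀ u u' : Fin n → {A // A ∈ P}, u ≠ u' →
          ∃ i, ι ⁻¹' ((u i : Set (OnePoint X))) ∩ ι ⁻¹' ((u' i : Set (OnePoint X))) = ∅ := by
        intro u u' huu
        obtain ⟨i, hi⟩ := Function.ne_iff.1 huu
        refine ⟨i, ?_⟩
        rw [← Set.preimage_inter, hP.2.2 _ (u i).2 _ (u' i).2 (fun h => hi (Subtype.ext h)),
          Set.preimage_empty]
      exact sum_measure_iInter_le_one (κ := Fin n → {A // A ∈ P})
        (A := fun u i => ι ⁻¹' ((u i : Set (OnePoint X)))) μ hfm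
        (fun u i => mEmb.measurable (hP.1 _ (u i).2)) hd'
    have htr : (∑ u : Fin n → {A // A ∈ P}, (q u).toReal) ≤ 1 := by
      rw [← ENNReal.toReal_sum (fun u _ => ((hqle u).trans_lt ENNReal.one_lt_top).ne)]
      exact toReal_le_one hle
    calc (∑ u : Fin n → {A // A ∈ P}, L * (q u).toReal)
        = L * (∑ u : Fin n → {A // A ∈ P}, (q u).toReal) := by rw [Finset.mul_sum]
      _ ≤ L * 1 := mul_le_mul_of_nonneg_left htr hL0
      _ = L := mul_one L
  calc partEntSum ν (onePointExtend f) P n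
      ≤ ∑ u : Fin n → {A // A ∈ P}, ((if u = u0 then (1 : ℝ) else 0)
          + (phiEnt ((q u).toReal) + L * (q u).toReal)) :=
        Finset.sum_le_sum fun u _ => hterm u
    _ = (∑ u : Fin n → {A // A ∈ P}, if u = u0 then (1 : ℝ) else 0)
          + ((∑ u : Fin n → {A // A ∈ P}, phiEnt ((q u).toReal))
            + (∑ u : Fin n → {A // A ∈ P}, L * (q u).toReal)) := by
        rw [Finset.sum_add_distrib, Finset.sum_add_distrib]
    _ ≤ 1 + (partEntSum μ f (P.image fun A => ι ⁻¹' A) n + L) := by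
        rw [hsum1]
        exact add_le_add le_rfl (add_le_add hsum2 hsum3)
    _ = partEntSum μ f (P.image fun A => ι ⁻¹' A) n + (1 + L) := by ring
end OnePointEntropyAux

end Aux
open MeasureTheory in
/-- For a perfect map `f` on a locally compact separable metric space admitting an
invariant Borel probability measure, the supremum of the measure-theoretic entropies of `f`
equals that of its extension `f̃` to the one-point compactification. -/
theorem iSup_measEnt_eq_onePoint {X : Type*} [MetricSpace X] [LocallyCompactSpace X]
    [TopologicalSpace.SeparableSpace X] [MeasurableSpace X] [BorelSpace X]
    [MeasurableSpace (OnePoint X)] [BorelSpace (OnePoint X)]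
    (f : X → X) (hf : IsPerfectMap f)
    (hne : ∃ μ : Measure X, IsProbabilityMeasure μ ∧ μ.map f = μ) :
    (⨆ (μ : Measure X) (_ : IsProbabilityMeasure μ ∧ μ.map f = μ), measEnt μ f) =
    (⨆ (ν : Measure (OnePoint X))
        (_ : IsProbabilityMeasure ν ∧ ν.map (onePointExtend f) = ν),
      measEnt ν (onePointExtend f)) := by
  classical
  obtain ⟨μ₀, hμ₀p, hμ₀i⟩ := hne
  have hfm : Measurable f := hf.1.measurable
  have hιm : Measurable ((↑·) : X → OnePoint X) := OnePointEntropyAux.mEmb.measurable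
  apply le_antisymm
  · refine iSup₂_le fun μ hμ => ?_
    haveI := hμ.1
    have hcomp : onePointExtend f ∘ ((↑·) : X → OnePoint X)
        = ((↑·) : X → OnePoint X) ∘ f := rfl
    have hinv : (μ.map ((↑·) : X → OnePoint X)).map (onePointExtend f)
        = μ.map ((↑·) : X → OnePoint X) := by
      rw [Measure.map_map (OnePointEntropyAux.measurable_opExt hfm) hιm, hcomp,
        ← Measure.map_map hιm hfm, hμ.2]
    refine le_iSup₂_of_le (μ.map ((↑·) : X → OnePoint X))
      ⟨Measure.isProbabilityMeasure_map hιm.aemeasurable, hinv⟩ ?_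
    exact OnePointEntropyAux.measEnt_le_map hfm μ
  · refine iSup₂_le fun ν hν => ?_
    haveI := hν.1
    by_cases hs : ν (Set.range ((↑·) : X → OnePoint X)) = 0
    · haveI := hμ₀p
      exact le_trans (OnePointEntropyAux.measEnt_eq_zero_of_infty hfm ν hs)
        (le_iSup₂_of_le μ₀ ⟨hμ₀p, hμ₀i⟩ zero_le)
    · obtain ⟨μ, hp, hi, hle⟩ := OnePointEntropyAux.measEnt_opExt_le hfm ν hν.2 hs
      exact le_trans hle (le_iSup₂_of_le μ ⟨hp, hi⟩ le_rfl)
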